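/- Let R be a semiring, V an R-module generated by a set S (every element of V is a finite R-linear combination of elements of S), and M an additive spine of R. Then every summand absorbing submodule W of V is generated as an R-module by the set W ∩ (MS), where MS = { m·s | m in M, s in S }. -/

import Mathlib

def halo (R : Type*) {V : Type*} [Semiring R] [AddCommMonoid V] [Module R V]
    (S : Set V) : Set V :=
  {v | ∃ l m : R, l • v ∈ S ∧ m • (l • v) = v}

def IsAdditiveSpine (R : Type*) {V : Type*} [Semiring R] [AddCommMonoid V] [Module R V]
    (S : Set V) : Prop :=
  AddSubmonoid.closure (halo R S) = ⊤

def IsSA {R V : Type*} [Semiring R] [AddCommMonoid V] [Module R V]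
    (W : Submodule R V) : Prop :=
  ∀ x y : V, x + y ∈ W → x ∈ W ∧ y ∈ W

theorem sa_generated_by_spine_product {R V : Type*} [Semiring R] [AddCommMonoid V]
    [Module R V] (S : Set V) (hS : Submodule.span R S = ⊤)
    (M : Set R) (hM : IsAdditiveSpine R M)
    (W : Submodule R V) (hW : IsSA W) :
    W = Submodule.span R ((W : Set V) ∩ Set.image2 (· • ·) M S) := by
  set T := (W : Set V) ∩ Set.image2 (· • ·) M S with hT
  apply le_antisymm
  · -- key: ∀ v ∈ span S, ∀ r, r • v ∈ W → r • v ∈ span T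
    have key : ∀ v ∈ Submodule.span R S, ∀ r : R, r • v ∈ W →
        r • v ∈ Submodule.span R T := by
      intro v hv
      induction hv using Submodule.span_induction with
      | mem x hx =>
        intro r
        have hr : r ∈ AddSubmonoid.closure (halo R M) := by
          rw [hM]; trivial
        induction hr using AddSubmonoid.closure_induction with
        | mem a ha =>
          intro hmem
          obtain ⟨l, m, hlM, hml⟩ := ha
          have h1 : (l • a) • x ∈ W := by
            rw [smul_eq_mul, mul_smul]
            exact W.smul_mem l hmem
          have h2 : (l • a) • x ∈ T :=
            ⟨h1, Set.mem_image2_of_mem hlM hx⟩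
          have := Submodule.smul_mem (Submodule.span R T) m (Submodule.subset_span h2)
          rwa [smul_smul, ← smul_eq_mul, hml] at this
        | zero =>
          intro _
          simp
        | add a b ha hb iha ihb =>
          intro hmem
          rw [add_smul] at hmem ⊢
          obtain ⟨h1, h2⟩ := hW _ _ hmem
          exact (Submodule.span R T).add_mem (iha h1) (ihb h2)
      | zero =>
        intro r hr
        simp
      | add x y _ _ ihx ihy =>
        intro r hr
        rw [smul_add] at hr ⊢
        obtain ⟨h1, h2⟩ := hW _ _ hr
        exact (Submodule.span R T).add_mem (ihx r h1) (ihy r h2)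
      | smul c x _ ih =>
        intro r hr
        rw [smul_smul] at hr ⊢
        exact ih (r * c) hr
    intro w hw
    have hv : w ∈ Submodule.span R S := by rw [hS]; trivial
    have := key w hv 1 (by simpa using hw)
    simpa using this
  · rw [Submodule.span_le]
    exact Set.inter_subset_left
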